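/- arXiv:2005.04614 — 2 statements merged into one kernel-verified Lean document; each statement's English description precedes it below -/
import Mathlib

section
/- If $w \in A_1(\mathbb{R}^n)$ and $w^{1-p'} \in A_{p'/r}(\mathbb{R}^n)$ for some $1 < r < p' < \infty$, then for every cube $Q \subset \mathbb{R}^n$, $\frac{1}{|Q|}\int_Q w^{r\frac{p'-1}{p'-r}}(x)\,dx \leq [w^{1-p'}]_{A_{p'/r}}^{\frac{1}{p'/r - 1}} [w]_{A_1}^{\frac{1}{(p'/r-1)(p-1)}} \left(\operatorname{essinf}_{y \in Q} w(y)\right)^{\frac{p'-1}{p'/r - 1}}.$ -/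
open MeasureTheory

noncomputable section

/-- The (closed) cube in `ℝⁿ` with center `c` and side length `l`. -/
def cube {n : ℕ} (c : Fin n → ℝ) (l : ℝ) : Set (Fin n → ℝ) :=
  {x | ∀ i, |x i - c i| ≤ l / 2}

/-- The average `(1/|Q|) ∫_Q f` of a function over a set. -/
def avgI {n : ℕ} (Q : Set (Fin n → ℝ)) (f : (Fin n → ℝ) → ℝ) : ℝ :=
  (volume Q).toReal⁻¹ * ∫ x in Q, f x

/-- `C` is an `A_1` bound for the weight `w`: for every cube `Q`,
`(1/|Q|)∫_Q w ≤ C · essinf_Q w`. -/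
def A1Bound {n : ℕ} (w : (Fin n → ℝ) → ℝ) (C : ℝ) : Prop :=
  ∀ (c : Fin n → ℝ) (l : ℝ), 0 < l →
    avgI (cube c l) w ≤ C * essInf w (volume.restrict (cube c l))

/-- `C` is an `A_s` bound for the weight `w`, `s ∈ (1,∞)`: for every cube `Q`,
`⟨w⟩_Q · ⟨w^{1-s'}⟩_Q^{s-1} ≤ C` where `s' = s/(s-1)`. -/
def ApBound {n : ℕ} (w : (Fin n → ℝ) → ℝ) (s : ℝ) (C : ℝ) : Prop :=
  ∀ (c : Fin n → ℝ) (l : ℝ), 0 < l →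
    avgI (cube c l) w *
      (avgI (cube c l) (fun x => w x ^ (1 - s / (s - 1)))) ^ (s - 1) ≤ C

set_option maxHeartbeats 1000000 in
/-- If `w ∈ A_1` with constant `C₁` and `w^{1-p'} ∈ A_{p'/r}` with constant `C₂`,
where `1 < r < p' < ∞` and `p' = p/(p-1)`, then for every cube `Q`,
`⟨w^{r(p'-1)/(p'-r)}⟩_Q ≤ C₂^{1/(p'/r-1)} C₁^{1/((p'/r-1)(p-1))}
(essinf_Q w)^{(p'-1)/(p'/r-1)}`. -/
theorem avg_rpow_le_of_a1_and_dual_ap {n : ℕ} (w : (Fin n → ℝ) → ℝ) (r p C₁ C₂ : ℝ)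
    (hw : ∀ x, 0 ≤ w x) (hwloc : MeasureTheory.LocallyIntegrable w)
    (hr : 1 < r) (hp : 1 < p) (hrp : r < p / (p - 1))
    (h1 : A1Bound w C₁)
    (h2 : ApBound (fun x => w x ^ (1 - p / (p - 1))) (p / (p - 1) / r) C₂) :
    ∀ (c : Fin n → ℝ) (l : ℝ), 0 < l →
      avgI (cube c l)
          (fun x => w x ^ (r * (p / (p - 1) - 1) / (p / (p - 1) - r))) ≤
        C₂ ^ (1 / (p / (p - 1) / r - 1)) *
          C₁ ^ (1 / ((p / (p - 1) / r - 1) * (p - 1))) *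
          (essInf w (volume.restrict (cube c l))) ^
            ((p / (p - 1) - 1) / (p / (p - 1) / r - 1)) := by
  intro c l hl
  have hp0 : (0:ℝ) < p := lt_trans one_pos hp
  have hp1 : (0:ℝ) < p - 1 := by linarith
  set P : ℝ := p / (p - 1) with hPdef
  set Q : Set (Fin n → ℝ) := cube c l with hQdef
  have hr0 : (0:ℝ) < r := lt_trans one_pos hr
  have hP1 : 1 < P := lt_trans hr hrp
  have hPr : r < P := hrp
  have hP0 : (0:ℝ) < P := lt_trans one_pos hP1
  set s : ℝ := P / r with hsdef
  have hs1 : 1 < s := by rw [hsdef]; exact (one_lt_div hr0).2 hPr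
  have hs0 : (0:ℝ) < s - 1 := by linarith
  -- exponent identities
  have hPm1 : P - 1 = 1 / (p - 1) := by rw [hPdef]; field_simp; ring
  have hEa : (1 - P) * (1 - s / (s - 1)) = r * (P - 1) / (P - r) := by
    have h3 : P / r - 1 ≠ 0 := sub_ne_zero.mpr (ne_of_gt ((one_lt_div hr0).2 hPr))
    have h4 : P - r ≠ 0 := sub_ne_zero.mpr (ne_of_gt hPr)
    rw [hsdef]
    field_simp
    ring
  have hal0 : 0 < r * (P - 1) / (P - r) :=
    div_pos (mul_pos hr0 (by linarith)) (by linarith)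
  have hE2 : 1 / p + (1 - P) / P = 0 := by
    rw [hPdef]; field_simp; ring
  have hE3 : -(1 / p) * P = -(P - 1) := by
    rw [hPdef]; field_simp; ring
  have hE7 : 1 / P * P = 1 := one_div_mul_cancel hP0.ne'
  have hE5 : (1 - P) / P * P = 1 - P := div_mul_cancel₀ _ hP0.ne'
  have hE8 : (P - 1) * (1 / (s - 1)) = 1 / ((s - 1) * (p - 1)) := by
    rw [hPm1]; field_simp
  -- cube facts
  have hQpi : Q = Set.univ.pi (fun i => Set.Icc (c i - l / 2) (c i + l / 2)) := by
    ext x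
    simp only [hQdef, cube, Set.mem_setOf_eq, Set.mem_pi, Set.mem_univ, Set.mem_Icc,
      true_implies, abs_le]
    exact forall_congr' fun i => by constructor <;> intro h <;> constructor <;>
      [linarith [h.1]; linarith [h.2]; linarith [h.1]; linarith [h.2]]
  have hQcomp : IsCompact Q := by
    rw [hQpi]; exact isCompact_univ_pi fun i => isCompact_Icc
  have hQvol : volume Q = ENNReal.ofReal l ^ n := by
    rw [hQpi, volume_pi_pi]
    have : ∀ i : Fin n, c i + l / 2 - (c i - l / 2) = l := fun i => by ring
    simp [Real.volume_Icc, this, Finset.prod_const, Finset.card_univ]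
  have hVne : volume Q ≠ ⊤ := by
    rw [hQvol]; exact ENNReal.pow_ne_top ENNReal.ofReal_ne_top
  have hV0 : 0 < (volume Q).toReal := by
    refine ENNReal.toReal_pos ?_ hVne
    rw [hQvol]
    exact pow_ne_zero _ (by simp [ENNReal.ofReal_eq_zero]; linarith)
  haveI : IsFiniteMeasure (volume.restrict Q) :=
    ⟨by rw [Measure.restrict_apply_univ]; exact hVne.lt_top⟩
  have hwint : IntegrableOn w Q := hwloc.integrableOn_isCompact hQcomp
  set m : ℝ := essInf w (volume.restrict Q) with hmdef
  have hm0 : 0 ≤ m := by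
    rw [hmdef, essInf_eq_sSup]
    by_cases hbdd : BddAbove {a : ℝ | volume.restrict Q {x | w x < a} = 0}
    · refine le_csSup hbdd ?_
      have hempty : {x | w x < (0:ℝ)} = ∅ :=
        Set.eq_empty_of_forall_notMem fun x hx => absurd (hw x) (not_le.2 hx)
      simp only [Set.mem_setOf_eq, hempty, measure_empty]
    · rw [Real.sSup_of_not_bddAbove hbdd]
  set V : ℝ := (volume Q).toReal with hVdef
  -- specialize hypotheses
  have H1 : V⁻¹ * (∫ x in Q, w x) ≤ C₁ * m := by
    have := h1 c l hl
    simpa only [avgI, ← hQdef, ← hmdef, ← hVdef] using this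
  have hIw0 : 0 ≤ ∫ x in Q, w x := integral_nonneg hw
  have hIa0 : 0 ≤ ∫ x in Q, w x ^ (r * (P - 1) / (P - r)) :=
    integral_nonneg fun x => Real.rpow_nonneg (hw x) _
  have hIs0 : 0 ≤ ∫ x in Q, w x ^ (1 - P) :=
    integral_nonneg fun x => Real.rpow_nonneg (hw x) _
  have hfun : (fun x => (w x ^ (1 - P)) ^ (1 - s / (s - 1)))
      = fun x => w x ^ (r * (P - 1) / (P - r)) := by
    funext x
    rw [← Real.rpow_mul (hw x), hEa]
  have H2 : (V⁻¹ * ∫ x in Q, w x ^ (1 - P)) *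
      (V⁻¹ * ∫ x in Q, w x ^ (r * (P - 1) / (P - r))) ^ (s - 1) ≤ C₂ := by
    have := h2 c l hl
    simp only [avgI, ← hQdef, ← hVdef] at this
    rwa [hfun] at this
  simp only [avgI, ← hVdef]
  rcases eq_or_lt_of_le hm0 with hm | hm
  · -- degenerate case: essinf = 0
    have hIw : ∫ x in Q, w x = 0 := by
      have h0 : V⁻¹ * (∫ x in Q, w x) ≤ 0 := by rw [← hm] at H1; simpa using H1
      refine le_antisymm ?_ hIw0
      calc (∫ x in Q, w x) = V * (V⁻¹ * ∫ x in Q, w x) := by field_simp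
        _ ≤ V * 0 := mul_le_mul_of_nonneg_left h0 hV0.le
        _ = 0 := mul_zero V
    have hwz : w =ᵐ[volume.restrict Q] 0 :=
      (integral_eq_zero_iff_of_nonneg_ae (Filter.Eventually.of_forall hw) hwint).1 hIw
    have hIa : ∫ x in Q, w x ^ (r * (P - 1) / (P - r)) = 0 := by
      have hz : (fun x => w x ^ (r * (P - 1) / (P - r))) =ᵐ[volume.restrict Q] 0 := by
        filter_upwards [hwz] with x hx
        simp only [Pi.zero_apply] at hx ⊢
        rw [hx, Real.zero_rpow hal0.ne']
      rw [integral_congr_ae hz]; simp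
    rw [hIa, mul_zero, ← hm, Real.zero_rpow (ne_of_gt (div_pos (by linarith) hs0)), mul_zero]
  · -- main case: essinf > 0
    have ha : ∀ᵐ x ∂(volume.restrict Q), m ≤ w x :=
      ae_essInf_le (Filter.isBoundedUnder_of ⟨0, fun x => hw x⟩)
    have hwm : AEMeasurable w (volume.restrict Q) := hwint.aemeasurable
    have hconj : Real.HolderConjugate p P := (Real.holderConjugate_iff_eq_conjExponent hp).2 hPdef
    -- Memℒp for w ^ (1/p)
    have hw1 : MemLp w 1 (volume.restrict Q) := memLp_one_iff_integrable.2 hwint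
    have hq0 : (ENNReal.ofReal p)⁻¹ ≠ 0 := by
      simp [ENNReal.inv_ne_zero, ENNReal.ofReal_ne_top]
    have hqt : (ENNReal.ofReal p)⁻¹ ≠ ⊤ := by
      rw [Ne, ENNReal.inv_eq_top, ENNReal.ofReal_eq_zero]
      linarith
    have hmem1 : MemLp (fun x => w x ^ (1 / p)) (ENNReal.ofReal p) (volume.restrict Q) := by
      have h := (memLp_norm_rpow_iff (q := (ENNReal.ofReal p)⁻¹) (p := 1) hw1.1 hq0 hqt).2 hw1
      have hQp : (1 : ENNReal) / (ENNReal.ofReal p)⁻¹ = ENNReal.ofReal p := by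
        rw [one_div, inv_inv]
      rw [hQp] at h
      have hfn : (fun x => ‖w x‖ ^ ((ENNReal.ofReal p)⁻¹).toReal)
          = fun x => w x ^ (1 / p) := by
        funext x
        rw [Real.norm_of_nonneg (hw x), ENNReal.toReal_inv, ENNReal.toReal_ofReal hp0.le,
          one_div]
      rwa [hfn] at h
    -- Memℒp for w ^ ((1-P)/P)
    have hexp_np : (1 - P) / P ≤ 0 := div_nonpos_iff.2 (Or.inr ⟨by linarith, hP0.le⟩)
    have hgm : AEStronglyMeasurable (fun x => w x ^ ((1 - P) / P)) (volume.restrict Q) :=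
      (hwm.pow aemeasurable_const).aestronglyMeasurable
    have hmem2 : MemLp (fun x => w x ^ ((1 - P) / P)) (ENNReal.ofReal P)
        (volume.restrict Q) := by
      refine MemLp.of_bound hgm (m ^ ((1 - P) / P)) ?_
      filter_upwards [ha] with x hx
      rw [Real.norm_of_nonneg (Real.rpow_nonneg (hw x) _)]
      exact Real.rpow_le_rpow_of_nonpos hm hx hexp_np
    have Hold := integral_mul_le_Lp_mul_Lq_of_nonneg hconj
      (Filter.Eventually.of_forall fun x => Real.rpow_nonneg (hw x) (1 / p))
      (Filter.Eventually.of_forall fun x => Real.rpow_nonneg (hw x) ((1 - P) / P))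
      hmem1 hmem2
    -- rewrite the three integrals in Hölder's inequality
    have e1 : (∫ x in Q, w x ^ (1 / p) * w x ^ ((1 - P) / P)) = V := by
      have hone : (fun x => w x ^ (1 / p) * w x ^ ((1 - P) / P))
          =ᵐ[volume.restrict Q] fun _ => (1:ℝ) := by
        filter_upwards [ha] with x hx
        have hx0 : 0 < w x := lt_of_lt_of_le hm hx
        rw [← Real.rpow_add hx0, hE2, Real.rpow_zero]
      rw [integral_congr_ae hone, integral_const, measureReal_restrict_apply_univ, measureReal_def, smul_eq_mul,
        mul_one, hVdef]
    have e2 : (∫ x in Q, (w x ^ (1 / p)) ^ p) = ∫ x in Q, w x := by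
      refine integral_congr_ae (Filter.Eventually.of_forall fun x => ?_)
      show (w x ^ (1 / p)) ^ p = w x
      rw [← Real.rpow_mul (hw x), one_div, inv_mul_cancel₀ hp0.ne', Real.rpow_one]
    have e3 : (∫ x in Q, (w x ^ ((1 - P) / P)) ^ P) = ∫ x in Q, w x ^ (1 - P) := by
      refine integral_congr_ae (Filter.Eventually.of_forall fun x => ?_)
      show (w x ^ ((1 - P) / P)) ^ P = w x ^ (1 - P)
      rw [← Real.rpow_mul (hw x), hE5]
    rw [e1, e2, e3] at Hold
    -- averages
    set A : ℝ := V⁻¹ * ∫ x in Q, w x with hAdef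
    set B : ℝ := V⁻¹ * ∫ x in Q, w x ^ (1 - P) with hBdef
    set T : ℝ := V⁻¹ * ∫ x in Q, w x ^ (r * (P - 1) / (P - r)) with hTdef
    have hA0' : 0 ≤ A := mul_nonneg (inv_nonneg.2 hV0.le) hIw0
    have hB0 : 0 ≤ B := mul_nonneg (inv_nonneg.2 hV0.le) hIs0
    have hT0 : 0 ≤ T := mul_nonneg (inv_nonneg.2 hV0.le) hIa0
    have hmA : m ≤ A := by
      have hmono : (∫ _x in Q, m) ≤ ∫ x in Q, w x :=
        integral_mono_ae (integrable_const m) hwint ha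
      rw [integral_const, measureReal_restrict_apply_univ, measureReal_def, smul_eq_mul, ← hVdef] at hmono
      have := mul_le_mul_of_nonneg_left hmono (inv_nonneg.2 hV0.le)
      calc m = V⁻¹ * (V * m) := by field_simp
        _ ≤ V⁻¹ * ∫ x in Q, w x := this
        _ = A := hAdef.symm
    have hA0 : 0 < A := lt_of_lt_of_le hm hmA
    -- 1 ≤ A^(1/p) * B^(1/P)
    have hIwV : (∫ x in Q, w x) = V * A := by rw [hAdef]; field_simp
    have hIsV : (∫ x in Q, w x ^ (1 - P)) = V * B := by rw [hBdef]; field_simp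
    have h6 : (V * A) ^ (1 / p) * (V * B) ^ (1 / P) = V * (A ^ (1 / p) * B ^ (1 / P)) := by
      rw [Real.mul_rpow hV0.le hA0', Real.mul_rpow hV0.le hB0]
      have hone : 1 / p + 1 / P = 1 := by
        simpa [one_div] using hconj.inv_add_inv_eq_one
      calc V ^ (1 / p) * A ^ (1 / p) * (V ^ (1 / P) * B ^ (1 / P))
          = V ^ (1 / p) * V ^ (1 / P) * (A ^ (1 / p) * B ^ (1 / P)) := by ring
        _ = V ^ (1 / p + 1 / P) * (A ^ (1 / p) * B ^ (1 / P)) := by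
            rw [Real.rpow_add hV0]
        _ = V * (A ^ (1 / p) * B ^ (1 / P)) := by rw [hone, Real.rpow_one]
    have h7 : 1 ≤ A ^ (1 / p) * B ^ (1 / P) := by
      have h5 : V * 1 ≤ V * (A ^ (1 / p) * B ^ (1 / P)) := by
        rw [mul_one, ← h6, ← hIwV, ← hIsV]; exact Hold
      exact (mul_le_mul_iff_right₀ hV0).1 h5
    -- B ≥ A^{-(P-1)}
    have hApow : 0 < A ^ (1 / p) := Real.rpow_pos_of_pos hA0 _
    have h8 : A ^ (-(1 / p)) ≤ B ^ (1 / P) := by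
      rw [Real.rpow_neg hA0.le]
      calc (A ^ (1 / p))⁻¹ = (A ^ (1 / p))⁻¹ * 1 := by ring
        _ ≤ (A ^ (1 / p))⁻¹ * (A ^ (1 / p) * B ^ (1 / P)) :=
            mul_le_mul_of_nonneg_left h7 (inv_nonneg.2 hApow.le)
        _ = B ^ (1 / P) := by field_simp
    have h9 := Real.rpow_le_rpow (Real.rpow_nonneg hA0.le _) h8 hP0.le
    rw [← Real.rpow_mul hA0.le, ← Real.rpow_mul hB0, hE3, hE7, Real.rpow_one] at h9
    -- combine with A1 and Ap bounds
    have hC1m0 : 0 < C₁ * m := lt_of_lt_of_le hA0 H1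
    have hC10 : 0 ≤ C₁ := by
      by_contra hc
      push_neg at hc
      have : C₁ * m < 0 := mul_neg_of_neg_of_pos hc hm
      linarith
    have hbeta : (C₁ * m) ^ (-(P - 1)) ≤ B :=
      le_trans (Real.rpow_le_rpow_of_nonpos hA0 H1 (by linarith)) h9
    have hTs0 : 0 ≤ T ^ (s - 1) := Real.rpow_nonneg hT0 _
    have h10 : (C₁ * m) ^ (-(P - 1)) * T ^ (s - 1) ≤ C₂ :=
      le_trans (mul_le_mul_of_nonneg_right hbeta hTs0) H2
    have hbeta0 : 0 < (C₁ * m) ^ (-(P - 1)) := Real.rpow_pos_of_pos hC1m0 _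
    have hC20 : 0 ≤ C₂ := le_trans (mul_nonneg hB0 hTs0) H2
    have h11 : T ^ (s - 1) ≤ C₂ * (C₁ * m) ^ (P - 1) := by
      have h' : T ^ (s - 1) ≤ C₂ / ((C₁ * m) ^ (-(P - 1))) :=
        (le_div_iff₀ hbeta0).2 (by rw [mul_comm] at h10; exact h10)
      rwa [div_eq_mul_inv, Real.rpow_neg hC1m0.le, inv_inv] at h'
    have h12 : T ≤ (C₂ * (C₁ * m) ^ (P - 1)) ^ (1 / (s - 1)) := by
      have h13 := Real.rpow_le_rpow hTs0 h11 (by positivity : (0:ℝ) ≤ 1 / (s - 1))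
      rwa [← Real.rpow_mul hT0, mul_one_div, div_self hs0.ne', Real.rpow_one] at h13
    refine le_trans h12 (le_of_eq ?_)
    have hEb : m ^ ((P - 1) * (1 / (s - 1))) = m ^ ((P - 1) / (s - 1)) := by
      rw [mul_one_div]
    rw [Real.mul_rpow hC20 (Real.rpow_nonneg hC1m0.le _),
      Real.mul_rpow hC10 hm0, Real.mul_rpow (Real.rpow_nonneg hC10 _) (Real.rpow_nonneg hm0 _),
      ← Real.rpow_mul hC10, ← Real.rpow_mul hm0, hEb, hE8]
    ring
end
end

section
/- Let $S$ be an operator that is bounded from $L^1(\mathbb{R}^n)$ to $L^{1,\infty}(\mathbb{R}^n)$ with constant $1$, and for $\lambda \in (0,1)$ define $S_\lambda^\star f(x) = \sup_{Q \ni x} (S(f\chi_Q))^*(\lambda|Q|)$, where the supremum is over all cubes $Q$ containing $x$ and $h^*$ denotes the non-increasing rearrangement. Then $S_\lambda^\star$ is bounded from $L^1(\mathbb{R}^n)$ to $L^{1,\infty}(\mathbb{R}^n)$ with constant $C_n \lambda^{-1}$, i.e. $|\{x : S_\lambda^\star f(x) > \alpha\}| \leq C_n (\lambda\alpha)^{-1}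 \|f\|_{L^1(\mathbb{R}^n)}$ for all $\alpha > 0$. -/
open MeasureTheory Metric Set

noncomputable section

lemma cube_eq_closedBall {n : ℕ} (c : Fin n → ℝ) {l : ℝ} (hl : 0 ≤ l) :
    cube c l = Metric.closedBall c (l / 2) := by
  ext x
  simp only [cube, mem_setOf_eq, Metric.mem_closedBall,
    dist_pi_le_iff (by linarith : (0:ℝ) ≤ l / 2), Real.dist_eq]

lemma volume_cube {n : ℕ} (c : Fin n → ℝ) {l : ℝ} (hl : 0 ≤ l) :
    volume (cube c l) = ENNReal.ofReal (l ^ n) := by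
  rw [cube_eq_closedBall c hl, Real.volume_pi_closedBall c (by linarith : (0:ℝ) ≤ l / 2)]
  norm_num
  congr 1
  ring

lemma cube_of_nzero {n : ℕ} (h : n = 0) (c : Fin n → ℝ) (l : ℝ) : cube c l = univ := by
  subst h
  ext x
  simp only [cube, mem_setOf_eq, mem_univ, iff_true]
  intro i
  exact i.elim0

/-- The non-increasing rearrangement `h^*(t) = inf{s > 0 : |{|h| > s}| ≤ t}`. -/
def rearr {α : Type*} [MeasurableSpace α] (μ : Measure α) (h : α → ℝ) (t : ℝ) : ℝ :=
  sInf {s : ℝ | 0 < s ∧ μ {x | s < |h x|} ≤ ENNReal.ofReal t}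

/-- `S_λ^⋆ f(x) = sup_{Q ∋ x} (S(fχ_Q))^*(λ|Q|)`, supremum over cubes containing `x`. -/
def Sstar {n : ℕ} (S : ((Fin n → ℝ) → ℝ) → ((Fin n → ℝ) → ℝ)) (lam : ℝ)
    (f : (Fin n → ℝ) → ℝ) (x : Fin n → ℝ) : ℝ :=
  sSup {v : ℝ | ∃ (c : Fin n → ℝ) (l : ℝ), 0 < l ∧ x ∈ cube c l ∧
    v = rearr volume (S ((cube c l).indicator f)) (lam * (volume (cube c l)).toReal)}

lemma selection {n : ℕ} {S : ((Fin n → ℝ) → ℝ) → ((Fin n → ℝ) → ℝ)}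
    (hS : ∀ g : (Fin n → ℝ) → ℝ, MeasureTheory.Integrable g → ∀ α : ℝ, 0 < α →
      ENNReal.ofReal α * volume {y | α < |S g y|} ≤ ENNReal.ofReal (∫ y, |g y|))
    {lam : ℝ} (hlam : 0 < lam) {f : (Fin n → ℝ) → ℝ} (hf : MeasureTheory.Integrable f)
    {α : ℝ} (hα : 0 < α) {x : Fin n → ℝ} (hx : α < Sstar S lam f x) :
    ∃ (c : Fin n → ℝ) (l : ℝ), 0 < l ∧ (n = 0 → l = 1) ∧ x ∈ cube c l ∧
      lam * α * (l ^ n) < ∫ y in cube c l, |f y| := by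
  have hex : ∃ v ∈ {v : ℝ | ∃ (c : Fin n → ℝ) (l : ℝ), 0 < l ∧ x ∈ cube c l ∧
      v = rearr volume (S ((cube c l).indicator f)) (lam * (volume (cube c l)).toReal)}, α < v := by
    by_contra h
    push_neg at h
    have := Real.sSup_le (fun v hv => h v hv) hα.le
    exact absurd hx (not_lt.mpr this)
  obtain ⟨v, ⟨c, l, hl, hxc, hveq⟩, hαv⟩ := hex
  set Q := cube c l with hQ
  have hQm : MeasurableSet Q := by
    rw [hQ, cube_eq_closedBall c hl.le]; exact (Metric.isClosed_closedBall).measurableSet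
  have hg : Integrable (Q.indicator f) := hf.indicator hQm
  have habs : ∀ y, |Q.indicator f y| = Q.indicator (fun z => |f z|) y := by
    intro y
    by_cases h : y ∈ Q <;> simp [Set.indicator_of_mem, Set.indicator_of_notMem, h]
  have hgint : (∫ y, |Q.indicator f y|) = ∫ y in Q, |f y| := by
    simp_rw [habs]
    exact integral_indicator hQm
  -- main inequality for the original cube
  have key : lam * α * (volume Q).toReal < ∫ y in Q, |f y| := by
    by_contra hcon
    push_neg at hcon
    have hmem : α ∈ {s : ℝ | 0 < s ∧
        volume {y | s < |S (Q.indicator f) y|} ≤ ENNReal.ofReal (lam * (volume Q).toReal)} := by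
      refine ⟨hα, ?_⟩
      have h1 := hS (Q.indicator f) hg α hα
      rw [hgint] at h1
      have h2 : ENNReal.ofReal (∫ y in Q, |f y|) ≤
          ENNReal.ofReal α * ENNReal.ofReal (lam * (volume Q).toReal) := by
        rw [← ENNReal.ofReal_mul hα.le]
        apply ENNReal.ofReal_le_ofReal
        nlinarith [ENNReal.toReal_nonneg (a := volume Q)]
      have h3 := h1.trans h2
      exact (ENNReal.mul_le_mul_iff_right (by simpa using hα) ENNReal.ofReal_ne_top).mp h3
    have hble : BddBelow {s : ℝ | 0 < s ∧
        volume {y | s < |S (Q.indicator f) y|} ≤ ENNReal.ofReal (lam * (volume Q).toReal)} :=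
      ⟨0, fun s hs => hs.1.le⟩
    have := csInf_le hble hmem
    rw [hveq] at hαv
    exact absurd this (not_le.mpr (by exact hαv))
  -- replace l by 1 when n = 0
  set l' : ℝ := if n = 0 then 1 else l with hl'
  have hl'pos : 0 < l' := by rw [hl']; split <;> [exact one_pos; exact hl]
  have hQeq : cube c l' = Q := by
    by_cases h : n = 0
    · rw [cube_of_nzero h, hQ, cube_of_nzero h]
    · rw [hQ, hl']; simp [h]
  refine ⟨c, l', hl'pos, fun h => by rw [hl']; simp [h], hQeq ▸ hxc, ?_⟩
  have hvol : (volume Q).toReal = l' ^ n := by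
    rw [← hQeq, volume_cube c hl'pos.le, ENNReal.toReal_ofReal (by positivity)]
  rw [hQeq, ← hvol]
  exact key

/-- If `S` is bounded from `L¹(ℝⁿ)` to `L^{1,∞}(ℝⁿ)` with constant `1`, then `S_λ^⋆`
is bounded from `L¹` to `L^{1,∞}` with constant `Cₙ λ⁻¹`:
`|{S_λ^⋆ f > α}| ≤ Cₙ (λα)⁻¹ ‖f‖_{L¹}` for all `α > 0`. -/
theorem Sstar_weak_one_one (n : ℕ) :
    ∃ C : ℝ, 0 < C ∧
      ∀ S : ((Fin n → ℝ) → ℝ) → ((Fin n → ℝ) → ℝ),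
        (∀ g : (Fin n → ℝ) → ℝ, MeasureTheory.Integrable g → ∀ α : ℝ, 0 < α →
          ENNReal.ofReal α * volume {y | α < |S g y|} ≤
            ENNReal.ofReal (∫ y, |g y|)) →
        ∀ lam : ℝ, 0 < lam → lam < 1 →
          ∀ f : (Fin n → ℝ) → ℝ, MeasureTheory.Integrable f → ∀ α : ℝ, 0 < α →
            volume {x | α < Sstar S lam f x} ≤
              ENNReal.ofReal (C / (lam * α) * ∫ y, |f y|) := by
  refine ⟨(4:ℝ) ^ n, by positivity, ?_⟩
  intro S hS lam hlam hlam1 f hf α hα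
  set I : ℝ := ∫ y, |f y| with hI
  set E : Set (Fin n → ℝ) := {x | α < Sstar S lam f x} with hE
  rcases Set.eq_empty_or_nonempty E with hEe | hEne
  · rw [hEe]; simp
  -- choose cubes
  choose c l hlpos hl1 hxmem hint using
    fun (x : ↥E) => selection hS hlam hf hα (x.2 : α < Sstar S lam f x.1)
  -- integral bounds
  have hintle : ∀ x : ↥E, (∫ y in cube (c x) (l x), |f y|) ≤ I :=
    fun x => setIntegral_le_integral hf.abs (Filter.Eventually.of_forall fun y => abs_nonneg _)
  have hIpos : 0 < I := by
    obtain ⟨x0, hx0⟩ := hEne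
    have h1 := hint ⟨x0, hx0⟩
    have h2 := hintle ⟨x0, hx0⟩
    nlinarith [mul_pos (mul_pos hlam hα) (pow_pos (hlpos ⟨x0, hx0⟩) n)]
  have hlan : ∀ x : ↥E, (l x) ^ n < I / (lam * α) := by
    intro x
    rw [lt_div_iff₀ (by positivity)]
    nlinarith [hint x, hintle x]
  -- uniform radius bound
  set R : ℝ := max 1 (I / (lam * α)) with hR
  have hrad : ∀ x : ↥E, l x / 2 ≤ R := by
    intro x
    rcases Nat.eq_zero_or_pos n with hn | hn
    · rw [hl1 x hn]; calc (1:ℝ)/2 ≤ 1 := by norm_num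
        _ ≤ R := le_max_left _ _
    · rcases le_or_gt (l x) 1 with h1 | h1
      · calc l x / 2 ≤ 1 := by linarith
          _ ≤ R := le_max_left _ _
      · have : l x ≤ (l x) ^ n := le_self_pow₀ h1.le hn.ne'
        calc l x / 2 ≤ l x := by linarith [hlpos x]
          _ ≤ I / (lam * α) := by linarith [hlan x]
          _ ≤ R := le_max_right _ _
  -- Vitali
  obtain ⟨u, -, hdisj, hcov⟩ :=
    Vitali.exists_disjoint_subfamily_covering_enlargement_closedBall (Set.univ : Set ↥E)
      c (fun x => l x / 2) R (fun a _ => hrad a) 4 (by norm_num)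
  -- each chosen ball = its cube
  have hball : ∀ x : ↥E, closedBall (c x) (l x / 2) = cube (c x) (l x) :=
    fun x => (cube_eq_closedBall (c x) (hlpos x).le).symm
  have hmeasB : ∀ x : ↥E, MeasurableSet (closedBall (c x) (l x / 2)) :=
    fun x => Metric.isClosed_closedBall.measurableSet
  have hvolB : ∀ x : ↥E, volume (closedBall (c x) (l x / 2)) = ENNReal.ofReal ((l x) ^ n) := by
    intro x; rw [hball, volume_cube _ (hlpos x).le]
  -- countability of u
  have hcount : u.Countable := by
    have h := MeasureTheory.Measure.countable_meas_pos_of_disjoint_iUnion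
      (μ := (volume : Measure (Fin n → ℝ)))
      (As := fun b : ↥u => closedBall (c b.1) (l b.1 / 2))
      (fun b => hmeasB b.1)
      (fun b b' hbb' => hdisj b.2 b'.2 (fun h => hbb' (Subtype.ext h)))
    have huniv : {b : ↥u | 0 < volume (closedBall (c b.1) (l b.1 / 2))} = Set.univ := by
      ext b
      simp only [Set.mem_setOf_eq, Set.mem_univ, iff_true, hvolB]
      have := hlpos b.1
      exact ENNReal.ofReal_pos.mpr (by positivity)
    rw [huniv, Set.countable_univ_iff] at h
    exact Set.countable_coe_iff.mp h
  -- covering of E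
  have hcover : E ⊆ ⋃ b ∈ u, closedBall (c b) (4 * (l b / 2)) := by
    intro x hx
    obtain ⟨b, hb, hsub⟩ := hcov ⟨x, hx⟩ (Set.mem_univ _)
    have : x ∈ closedBall (c ⟨x, hx⟩) (l ⟨x, hx⟩ / 2) := by
      rw [hball]; exact hxmem ⟨x, hx⟩
    exact Set.mem_biUnion hb (hsub this)
  -- weighted measure
  set ν : Measure (Fin n → ℝ) := volume.withDensity (fun y => ENNReal.ofReal |f y|) with hν
  have hνB : ∀ x : ↥E, ν (closedBall (c x) (l x / 2)) =
      ENNReal.ofReal (∫ y in cube (c x) (l x), |f y|) := by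
    intro x
    rw [hν, withDensity_apply _ (hmeasB x), hball]
    exact (ofReal_integral_eq_lintegral_ofReal (hf.abs.restrict)
      (Filter.Eventually.of_forall fun y => abs_nonneg _)).symm
  have hνuniv : ν Set.univ = ENNReal.ofReal I := by
    rw [hν, withDensity_apply _ MeasurableSet.univ, setLIntegral_univ]
    exact (ofReal_integral_eq_lintegral_ofReal hf.abs
      (Filter.Eventually.of_forall fun y => abs_nonneg _)).symm
  -- single ball estimate
  have hone : ∀ x : ↥E, volume (closedBall (c x) (l x / 2)) ≤
      (ENNReal.ofReal (lam * α))⁻¹ * ν (closedBall (c x) (l x / 2)) := by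
    intro x
    have h1 : ENNReal.ofReal (lam * α) * volume (closedBall (c x) (l x / 2)) ≤
        ν (closedBall (c x) (l x / 2)) := by
      rw [hvolB, hνB, ← ENNReal.ofReal_mul (by positivity)]
      exact ENNReal.ofReal_le_ofReal (by nlinarith [hint x])
    calc volume (closedBall (c x) (l x / 2)) =
        (ENNReal.ofReal (lam * α))⁻¹ * (ENNReal.ofReal (lam * α) *
          volume (closedBall (c x) (l x / 2))) := by
          rw [← mul_assoc, ENNReal.inv_mul_cancel (ne_of_gt (ENNReal.ofReal_pos.mpr (by positivity)))
            ENNReal.ofReal_ne_top, one_mul]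
      _ ≤ (ENNReal.ofReal (lam * α))⁻¹ * ν (closedBall (c x) (l x / 2)) :=
          mul_le_mul_right h1 _
  -- sum of ν over disjoint balls
  have hsum : ∑' b : ↥u, ν (closedBall (c b.1) (l b.1 / 2)) ≤ ENNReal.ofReal I := by
    rw [← measure_biUnion hcount hdisj (fun b _ => hmeasB b)]
    exact hνuniv ▸ measure_mono (Set.subset_univ _)
  -- big ball volume
  have hbig : ∀ x : ↥E, volume (closedBall (c x) (4 * (l x / 2))) =
      ENNReal.ofReal ((4:ℝ)^n) * volume (closedBall (c x) (l x / 2)) := by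
    intro x
    rw [hvolB, Real.volume_pi_closedBall _ (by linarith [hlpos x]), Fintype.card_fin,
      ← ENNReal.ofReal_mul (by positivity), ← mul_pow]
    congr 2
    ring
  -- put it together
  calc volume E ≤ volume (⋃ b ∈ u, closedBall (c b) (4 * (l b / 2))) := measure_mono hcover
    _ ≤ ∑' b : ↥u, volume (closedBall (c b.1) (4 * (l b.1 / 2))) := measure_biUnion_le _ hcount _
    _ = ENNReal.ofReal ((4:ℝ)^n) * ∑' b : ↥u, volume (closedBall (c b.1) (l b.1 / 2)) := by
        simp_rw [hbig]; exact ENNReal.tsum_mul_left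
    _ ≤ ENNReal.ofReal ((4:ℝ)^n) * ((ENNReal.ofReal (lam * α))⁻¹ *
          ∑' b : ↥u, ν (closedBall (c b.1) (l b.1 / 2))) := by
        gcongr
        calc ∑' b : ↥u, volume (closedBall (c b.1) (l b.1 / 2)) ≤
            ∑' b : ↥u, (ENNReal.ofReal (lam * α))⁻¹ * ν (closedBall (c b.1) (l b.1 / 2)) :=
              ENNReal.tsum_le_tsum (fun b => hone b.1)
          _ = _ := ENNReal.tsum_mul_left
    _ ≤ ENNReal.ofReal ((4:ℝ)^n) * ((ENNReal.ofReal (lam * α))⁻¹ * ENNReal.ofReal I) := by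
        gcongr
    _ = ENNReal.ofReal ((4:ℝ)^n / (lam * α) * I) := by
        rw [← ENNReal.ofReal_inv_of_pos (by positivity), ← ENNReal.ofReal_mul (by positivity),
          ← ENNReal.ofReal_mul (by positivity)]
        ring_nf
end
end
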